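/- Let 0 < γ < 1, n < 1 and ν ≥ 1/2 − n. Then for all x > 0, ∫_x^∞ e^{γt} K_{ν+n}(t)/t^ν dt < (e^{γx}/(1−γ)) · ∫_x^∞ K_{ν+n}(t)/t^ν dt. -/

import Mathlib

open MeasureTheory Set Real Filter Topology

/-- Modified Bessel function of the second kind:
`K_ν(x) = ∫_0^∞ exp(−x cosh t) cosh(ν t) dt`. -/
noncomputable def besselK (ν x : ℝ) : ℝ :=
  ∫ t in Ioi (0 : ℝ), Real.exp (-(x * Real.cosh t)) * Real.cosh (ν * t)


lemma cosh_le_exp_abs (y : ℝ) : Real.cosh y ≤ Real.exp |y| := by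
  rw [← Real.cosh_abs, Real.cosh_eq]
  have h1 : Real.exp (-|y|) ≤ Real.exp |y| := Real.exp_le_exp.2 (by simp [abs_nonneg, neg_le_self_iff])
  linarith

lemma abs_sinh_le_exp_abs (y : ℝ) : |Real.sinh y| ≤ Real.exp |y| := by
  rw [Real.abs_sinh]
  calc Real.sinh |y| ≤ Real.cosh |y| := (Real.sinh_lt_cosh _).le
    _ ≤ Real.exp |y| := by rw [Real.cosh_abs]; exact cosh_le_exp_abs y

lemma sq_div_eight_le_cosh {t : ℝ} (ht : 0 ≤ t) : t ^ 2 / 8 ≤ Real.cosh t := by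
  have h1 : (1 + t/2) ^ 2 ≤ Real.exp t := by
    have := Real.add_one_le_exp (t/2)
    calc (1 + t/2)^2 ≤ Real.exp (t/2) ^ 2 := by
          apply pow_le_pow_left₀ (by positivity) (by linarith)
      _ = Real.exp t := by rw [← Real.exp_nat_mul]; ring_nf
  have h2 : Real.exp t / 2 ≤ Real.cosh t := by
    rw [Real.cosh_eq]; have := (Real.exp_pos (-t)).le; linarith
  nlinarith [sq_nonneg t]

lemma integrable_exp_linear_sub_sq {b : ℝ} (hb : 0 < b) (c : ℝ) :
    Integrable (fun t : ℝ => Real.exp (c * t - b * t ^ 2)) := by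
  have h := (integrable_exp_neg_mul_sq hb).comp_sub_right (c / (2 * b))
  have h2 := h.const_mul (Real.exp (c ^ 2 / (4 * b)))
  refine h2.congr (Filter.Eventually.of_forall fun t => ?_)
  show Real.exp _ * Real.exp _ = _
  rw [← Real.exp_add]
  congr 1
  field_simp
  ring

/-- Master integrability lemma for Bessel-type integrands. -/
lemma integrableOn_exp_cosh {x : ℝ} (hx : 0 < x) (c : ℝ) :
    IntegrableOn (fun t => Real.exp (c * t - x * Real.cosh t)) (Ioi 0) := by
  refine Integrable.mono ((integrable_exp_linear_sub_sq (b := x / 8) (by positivity) c).restrict (s := Ioi 0)) ?_ ?_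
  · exact (Real.continuous_exp.comp ((continuous_const.mul continuous_id).sub
      (continuous_const.mul Real.continuous_cosh))).aestronglyMeasurable.restrict
  · filter_upwards [ae_restrict_mem measurableSet_Ioi] with t ht
    simp only [norm_eq_abs, Real.abs_exp]
    apply Real.exp_le_exp.2
    have h3 := sq_div_eight_le_cosh (le_of_lt (mem_Ioi.1 ht))
    nlinarith

lemma cosh_mul_le_exp {ν t : ℝ} (ht : 0 ≤ t) : Real.cosh (ν * t) ≤ Real.exp (|ν| * t) := by
  calc Real.cosh (ν * t) ≤ Real.exp |ν * t| := cosh_le_exp_abs _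
    _ = Real.exp (|ν| * t) := by rw [abs_mul, abs_of_nonneg ht]

lemma besselK_integrand_integrableOn {x : ℝ} (hx : 0 < x) (ν : ℝ) :
    IntegrableOn (fun t => Real.exp (-(x * Real.cosh t)) * Real.cosh (ν * t)) (Ioi 0) := by
  refine Integrable.mono (integrableOn_exp_cosh hx |ν|) ?_ ?_
  · exact ((Real.continuous_exp.comp ((continuous_const.mul Real.continuous_cosh).neg)).mul
      (Real.continuous_cosh.comp (continuous_const.mul continuous_id))).aestronglyMeasurable.restrict
  · filter_upwards [ae_restrict_mem measurableSet_Ioi] with t ht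
    have ht0 : (0:ℝ) < t := ht
    have hc : (0:ℝ) < Real.cosh (ν * t) := Real.cosh_pos _
    rw [norm_eq_abs, norm_eq_abs, abs_of_pos (by positivity), Real.abs_exp]
    calc Real.exp (-(x * Real.cosh t)) * Real.cosh (ν * t)
        ≤ Real.exp (-(x * Real.cosh t)) * Real.exp (|ν| * t) :=
          mul_le_mul_of_nonneg_left (cosh_mul_le_exp ht0.le) (Real.exp_pos _).le
      _ = Real.exp (|ν| * t - x * Real.cosh t) := by rw [← Real.exp_add]; ring_nf

lemma besselK_pos {x : ℝ} (hx : 0 < x) (ν : ℝ) : 0 < besselK ν x := by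
  rw [besselK, setIntegral_pos_iff_support_of_nonneg_ae]
  · have : (Function.support fun t => Real.exp (-(x * Real.cosh t)) * Real.cosh (ν * t)) = univ := by
      ext t
      simp only [Function.mem_support, mem_univ, iff_true]
      positivity
    rw [this, univ_inter]
    rw [Real.volume_Ioi]; exact ENNReal.zero_lt_top
  · filter_upwards [ae_restrict_mem measurableSet_Ioi] with t _
    positivity
  · exact besselK_integrand_integrableOn hx ν

lemma besselK_mono_order {a b x : ℝ} (hx : 0 < x) (hab : |a| ≤ |b|) :
    besselK a x ≤ besselK b x := by
  refine setIntegral_mono_on (besselK_integrand_integrableOn hx a)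
    (besselK_integrand_integrableOn hx b) measurableSet_Ioi fun t ht => ?_
  have ht0 : (0:ℝ) < t := ht
  refine mul_le_mul_of_nonneg_left ?_ (Real.exp_pos _).le
  rw [Real.cosh_le_cosh, abs_mul, abs_mul]
  exact mul_le_mul_of_nonneg_right hab (abs_nonneg t)

lemma exp_mul_besselK_le {μ γ t : ℝ} (hγ0 : 0 ≤ γ) (hγ1 : γ < 1) (ht : 0 < t) :
    Real.exp (γ * t) * besselK μ t ≤ besselK μ ((1 - γ) * t) := by
  rw [besselK, besselK, ← integral_const_mul]
  refine setIntegral_mono_on ((besselK_integrand_integrableOn ht μ).const_mul _)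
    (besselK_integrand_integrableOn (by nlinarith) μ) measurableSet_Ioi fun u hu => ?_
  rw [← mul_assoc, ← Real.exp_add]
  refine mul_le_mul_of_nonneg_right (Real.exp_le_exp.2 ?_) (Real.cosh_pos _).le
  have h1 : (1:ℝ) ≤ Real.cosh u := Real.one_le_cosh u
  nlinarith [mul_nonneg (mul_nonneg hγ0 ht.le) (sub_nonneg.2 h1)]

lemma besselK_le_exp_decay {μ s t : ℝ} (hs : 0 < s) (hst : s ≤ t) :
    besselK μ t ≤ Real.exp (s - t) * besselK μ s := by
  rw [besselK, besselK, ← integral_const_mul]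
  refine setIntegral_mono_on (besselK_integrand_integrableOn (lt_of_lt_of_le hs hst) μ)
    ((besselK_integrand_integrableOn hs μ).const_mul _) measurableSet_Ioi fun u hu => ?_
  rw [← mul_assoc, ← Real.exp_add]
  refine mul_le_mul_of_nonneg_right (Real.exp_le_exp.2 ?_) (Real.cosh_pos _).le
  have h1 : (1:ℝ) ≤ Real.cosh u := Real.one_le_cosh u
  nlinarith [mul_nonneg (sub_nonneg.2 hst) (sub_nonneg.2 h1)]

lemma integrableOn_cosh_mul {x : ℝ} (hx : 0 < x) (ν : ℝ) :
    IntegrableOn (fun t => Real.cosh t * (Real.exp (-(x * Real.cosh t)) * Real.cosh (ν * t)))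
      (Ioi 0) := by
  refine Integrable.mono (integrableOn_exp_cosh hx (|ν| + 1)) ?_ ?_
  · exact (Real.continuous_cosh.mul ((Real.continuous_exp.comp
      ((continuous_const.mul Real.continuous_cosh).neg)).mul
      (Real.continuous_cosh.comp (continuous_const.mul continuous_id)))).aestronglyMeasurable.restrict
  · filter_upwards [ae_restrict_mem measurableSet_Ioi] with t ht
    have ht0 : (0:ℝ) < t := ht
    have hc : (0:ℝ) < Real.cosh (ν * t) := Real.cosh_pos _
    have hc2 : (0:ℝ) < Real.cosh t := Real.cosh_pos _
    rw [norm_eq_abs, norm_eq_abs, abs_of_pos (by positivity), Real.abs_exp]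
    have h1 : Real.cosh t ≤ Real.exp t := by
      have := cosh_le_exp_abs t; rwa [abs_of_pos ht0] at this
    calc Real.cosh t * (Real.exp (-(x * Real.cosh t)) * Real.cosh (ν * t))
        ≤ Real.exp t * (Real.exp (-(x * Real.cosh t)) * Real.exp (|ν| * t)) := by
          apply mul_le_mul h1 (mul_le_mul_of_nonneg_left (cosh_mul_le_exp ht0.le)
            (Real.exp_pos _).le) (by positivity) (Real.exp_pos _).le
      _ = Real.exp ((|ν| + 1) * t - x * Real.cosh t) := by
          rw [← Real.exp_add, ← Real.exp_add]; ring_nf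

lemma integrableOn_sinh_mul {x : ℝ} (hx : 0 < x) (ν : ℝ) :
    IntegrableOn (fun t => Real.sinh t * Real.exp (-(x * Real.cosh t)) * Real.sinh (ν * t))
      (Ioi 0) := by
  refine Integrable.mono (integrableOn_exp_cosh hx (|ν| + 1)) ?_ ?_
  · exact ((Real.continuous_sinh.mul (Real.continuous_exp.comp
      ((continuous_const.mul Real.continuous_cosh).neg))).mul
      (Real.continuous_sinh.comp (continuous_const.mul continuous_id))).aestronglyMeasurable.restrict
  · filter_upwards [ae_restrict_mem measurableSet_Ioi] with t ht
    have ht0 : (0:ℝ) < t := ht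
    rw [norm_eq_abs, norm_eq_abs, Real.abs_exp, abs_mul, abs_mul, Real.abs_exp]
    have h1 : |Real.sinh t| ≤ Real.exp t := by
      have := abs_sinh_le_exp_abs t; rwa [abs_of_pos ht0] at this
    have h2 : |Real.sinh (ν * t)| ≤ Real.exp (|ν| * t) := by
      have := abs_sinh_le_exp_abs (ν * t)
      rwa [abs_mul, abs_of_pos ht0] at this
    calc |Real.sinh t| * Real.exp (-(x * Real.cosh t)) * |Real.sinh (ν * t)|
        ≤ Real.exp t * Real.exp (-(x * Real.cosh t)) * Real.exp (|ν| * t) := by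
          apply mul_le_mul (mul_le_mul_of_nonneg_right h1 (Real.exp_pos _).le) h2
            (abs_nonneg _) (by positivity)
      _ = Real.exp ((|ν| + 1) * t - x * Real.cosh t) := by
          rw [← Real.exp_add, ← Real.exp_add]; ring_nf

lemma cosh_mul_cosh (a b : ℝ) : Real.cosh a * Real.cosh b =
    (Real.cosh (a + b) + Real.cosh (a - b)) / 2 := by
  rw [Real.cosh_add, Real.cosh_sub]; ring

lemma sinh_mul_sinh (a b : ℝ) : Real.sinh a * Real.sinh b =
    (Real.cosh (a + b) - Real.cosh (a - b)) / 2 := by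
  rw [Real.cosh_add, Real.cosh_sub]; ring

/-- `K_ν'(x) = -(K_{ν-1}(x) + K_{ν+1}(x))/2` -/
lemma hasDerivAt_besselK {x : ℝ} (hx : 0 < x) (ν : ℝ) :
    HasDerivAt (fun y => besselK ν y)
      (-((besselK (ν-1) x + besselK (ν+1) x) / 2)) x := by
  have key : HasDerivAt (fun y => besselK ν y)
      (∫ t in Ioi (0:ℝ), -(Real.cosh t * (Real.exp (-(x * Real.cosh t)) * Real.cosh (ν * t)))) x := by
    refine (hasDerivAt_integral_of_dominated_loc_of_deriv_le (s := Metric.ball x (x/2)) (Metric.ball_mem_nhds x (by positivity))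
      (F := fun y t => Real.exp (-(y * Real.cosh t)) * Real.cosh (ν * t))
      (F' := fun y t => -(Real.cosh t * (Real.exp (-(y * Real.cosh t)) * Real.cosh (ν * t))))
      (bound := fun t => Real.exp ((|ν| + 1) * t - (x/2) * Real.cosh t))
      ?_ ?_ ?_ ?_ ?_ ?_).2
    · filter_upwards with y
      exact ((Real.continuous_exp.comp ((continuous_const.mul Real.continuous_cosh).neg)).mul
        (Real.continuous_cosh.comp (continuous_const.mul continuous_id))).aestronglyMeasurable.restrict
    · exact besselK_integrand_integrableOn hx ν
    · exact ((Real.continuous_cosh.mul ((Real.continuous_exp.comp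
        ((continuous_const.mul Real.continuous_cosh).neg)).mul
        (Real.continuous_cosh.comp (continuous_const.mul continuous_id)))).neg).aestronglyMeasurable.restrict
    · filter_upwards [ae_restrict_mem measurableSet_Ioi] with t ht y hy
      have ht0 : (0:ℝ) < t := ht
      have hy2 : x/2 < y := by
        have := abs_lt.1 (mem_ball_iff_norm.1 hy); linarith [this.1]
      rw [norm_neg, norm_eq_abs, abs_of_pos (by positivity)]
      have h1 : Real.cosh t ≤ Real.exp t := by
        have := cosh_le_exp_abs t; rwa [abs_of_pos ht0] at this
      have h2 : Real.exp (-(y * Real.cosh t)) ≤ Real.exp (-(x/2 * Real.cosh t)) :=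
        Real.exp_le_exp.2 (by nlinarith [Real.cosh_pos t, hy2])
      calc Real.cosh t * (Real.exp (-(y * Real.cosh t)) * Real.cosh (ν * t))
          ≤ Real.exp t * (Real.exp (-(x/2 * Real.cosh t)) * Real.exp (|ν| * t)) := by
            apply mul_le_mul h1 (mul_le_mul h2 (cosh_mul_le_exp ht0.le) (Real.cosh_pos _).le
              (Real.exp_pos _).le) (by positivity) (Real.exp_pos _).le
        _ = Real.exp ((|ν| + 1) * t - x/2 * Real.cosh t) := by
            rw [← Real.exp_add, ← Real.exp_add]; ring_nf
    · exact integrableOn_exp_cosh (by positivity) (|ν| + 1)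
    · filter_upwards [ae_restrict_mem measurableSet_Ioi] with t _ y _
      have h : HasDerivAt (fun y : ℝ => -(y * Real.cosh t)) (-Real.cosh t) y :=
        (hasDerivAt_mul_const (Real.cosh t)).neg
      have := (h.exp).mul_const (Real.cosh (ν * t))
      refine this.congr_deriv ?_
      ring
  convert key using 1
  have h1 := integrableOn_cosh_mul hx ν
  rw [integral_neg]
  congr 1
  have : ∀ t ∈ Ioi (0:ℝ), Real.cosh t * (Real.exp (-(x * Real.cosh t)) * Real.cosh (ν * t)) =
      (Real.exp (-(x * Real.cosh t)) * Real.cosh ((ν-1) * t)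
        + Real.exp (-(x * Real.cosh t)) * Real.cosh ((ν+1) * t)) / 2 := by
    intro t _
    have := cosh_mul_cosh t (ν * t)
    have e1 : t + ν * t = (ν + 1) * t := by ring
    have e2 : t - ν * t = -((ν - 1) * t) := by ring
    rw [e1, e2, Real.cosh_neg] at this
    rw [mul_comm (Real.cosh t), mul_assoc, mul_comm (Real.cosh (ν * t)), this]
    ring
  rw [setIntegral_congr_fun measurableSet_Ioi this]
  rw [besselK, besselK]
  rw [integral_div, integral_add (besselK_integrand_integrableOn hx (ν-1))
    (besselK_integrand_integrableOn hx (ν+1))]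

lemma besselK_recurrence {x : ℝ} (hx : 0 < x) (ν : ℝ) :
    besselK (ν+1) x - besselK (ν-1) x = 2 * ν / x * besselK ν x := by
  set φ : ℝ → ℝ := fun u => Real.exp (-(x * Real.cosh u)) * Real.sinh (ν * u) with hφ
  set φ' : ℝ → ℝ := fun u => ν * (Real.exp (-(x * Real.cosh u)) * Real.cosh (ν * u))
      - x * (Real.sinh u * Real.exp (-(x * Real.cosh u)) * Real.sinh (ν * u)) with hφ'
  have hderiv : ∀ u ∈ Ioi (0:ℝ), HasDerivAt φ (φ' u) u := by
    intro u _
    have h1 : HasDerivAt (fun u : ℝ => -(x * Real.cosh u)) (-(x * Real.sinh u)) u :=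
      ((Real.hasDerivAt_cosh u).const_mul x).neg
    have h2 : HasDerivAt (fun u : ℝ => Real.sinh (ν * u)) (Real.cosh (ν * u) * ν) u := by
      have h0 : HasDerivAt (fun u : ℝ => ν * u) ν u := by simpa using (hasDerivAt_id u).const_mul ν
      exact h0.sinh
    have := (h1.exp).mul h2
    refine this.congr_deriv ?_
    simp only [hφ']
    ring
  have hint : IntegrableOn φ' (Ioi 0) := by
    exact (( besselK_integrand_integrableOn hx ν).const_mul ν).sub
      ((integrableOn_sinh_mul hx ν).const_mul x)
  have hcont : ContinuousWithinAt φ (Ici 0) 0 := by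
    apply Continuous.continuousWithinAt
    exact (Real.continuous_exp.comp ((continuous_const.mul Real.continuous_cosh).neg)).mul
      (Real.continuous_sinh.comp (continuous_const.mul continuous_id))
  have htop : Tendsto φ atTop (𝓝 0) := by
    have hg : Tendsto (fun u : ℝ => Real.exp (-u)) atTop (𝓝 0) := by
      exact Real.tendsto_exp_atBot.comp tendsto_neg_atTop_atBot
    refine squeeze_zero_norm' ?_ hg
    · filter_upwards [eventually_ge_atTop (max 0 (8*(|ν|+1)/x))] with u hu
      have hu0 : (0:ℝ) ≤ u := le_trans (le_max_left _ _) hu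
      have hu1 : 8*(|ν|+1)/x ≤ u := le_trans (le_max_right _ _) hu
      have hcosh : u^2/8 ≤ Real.cosh u := sq_div_eight_le_cosh hu0
      have hsinh : |Real.sinh (ν * u)| ≤ Real.exp (|ν| * u) := by
        have := abs_sinh_le_exp_abs (ν * u)
        rwa [abs_mul, abs_of_nonneg hu0] at this
      rw [norm_eq_abs, abs_mul, Real.abs_exp]
      calc Real.exp (-(x * Real.cosh u)) * |Real.sinh (ν * u)|
          ≤ Real.exp (-(x * Real.cosh u)) * Real.exp (|ν| * u) :=
            mul_le_mul_of_nonneg_left hsinh (Real.exp_pos _).le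
        _ = Real.exp (|ν| * u - x * Real.cosh u) := by rw [← Real.exp_add]; ring_nf
        _ ≤ Real.exp (-u) := by
            apply Real.exp_le_exp.2
            have h8 : 8*(|ν|+1) ≤ x * u := by
              rw [div_le_iff₀ hx] at hu1; linarith
            nlinarith [abs_nonneg ν, mul_le_mul_of_nonneg_left hcosh hx.le]
  have key := integral_Ioi_of_hasDerivAt_of_tendsto hcont hderiv hint htop
  have hφ0 : φ 0 = 0 := by simp [hφ]
  rw [hφ0, sub_zero] at key
  -- key : ∫ u in Ioi 0, φ' u = 0
  have hsplit : ∫ u in Ioi (0:ℝ), φ' u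
      = ν * besselK ν x - x * ((besselK (ν+1) x - besselK (ν-1) x)/2) := by
    have heq : ∀ u ∈ Ioi (0:ℝ), Real.sinh u * Real.exp (-(x * Real.cosh u)) * Real.sinh (ν * u)
          = (Real.exp (-(x * Real.cosh u)) * Real.cosh ((ν+1) * u)
             - Real.exp (-(x * Real.cosh u)) * Real.cosh ((ν-1) * u)) / 2 := by
        intro u _
        have := sinh_mul_sinh u (ν * u)
        have e1 : u + ν * u = (ν + 1) * u := by ring
        have e2 : u - ν * u = -((ν - 1) * u) := by ring
        rw [e1, e2, Real.cosh_neg] at this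
        calc Real.sinh u * Real.exp (-(x * Real.cosh u)) * Real.sinh (ν * u)
            = Real.exp (-(x * Real.cosh u)) * (Real.sinh u * Real.sinh (ν * u)) := by ring
          _ = _ := by rw [this]; ring
    have hg_eq : (∫ u in Ioi (0:ℝ), Real.sinh u * Real.exp (-(x * Real.cosh u)) * Real.sinh (ν * u))
        = (besselK (ν+1) x - besselK (ν-1) x) / 2 := by
      rw [setIntegral_congr_fun measurableSet_Ioi heq, integral_div,
        integral_sub (besselK_integrand_integrableOn hx (ν+1))
          (besselK_integrand_integrableOn hx (ν-1))]
      rfl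
    rw [integral_sub ((besselK_integrand_integrableOn hx ν).const_mul ν)
      ((integrableOn_sinh_mul hx ν).const_mul x), integral_const_mul, integral_const_mul, hg_eq]
    rfl
  rw [hsplit] at key
  field_simp at key ⊢
  linarith
lemma hasDerivAt_rpow_mul_besselK {x : ℝ} (hx : 0 < x) (ν : ℝ) :
    HasDerivAt (fun y => y ^ (-ν) * besselK ν y)
      (-(x ^ (-ν) * besselK (ν+1) x)) x := by
  have h1 : HasDerivAt (fun y : ℝ => y ^ (-ν)) (-ν * x ^ (-ν - 1)) x :=
    Real.hasDerivAt_rpow_const (Or.inl hx.ne')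
  have h2 := (h1.mul (hasDerivAt_besselK hx ν))
  refine h2.congr_deriv ?_
  have hrec := besselK_recurrence hx ν
  have h3 : besselK (ν-1) x = besselK (ν+1) x - 2*ν/x * besselK ν x := by linarith
  have hpow : x ^ (-ν - 1) = x ^ (-ν) / x := by
    rw [← Real.rpow_sub_one hx.ne']
  rw [hpow, h3]
  field_simp
  ring

lemma besselK_continuousOn (ν : ℝ) : ContinuousOn (fun y => besselK ν y) (Ioi 0) :=
  fun _ hy => ((hasDerivAt_besselK hy ν).continuousAt).continuousWithinAt

lemma tendsto_rpow_mul_besselK (ν μ : ℝ) :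
    Tendsto (fun y => y ^ (-ν) * besselK μ y) atTop (𝓝 0) := by
  have hb : Tendsto (fun y : ℝ => (Real.exp 1 * besselK μ 1) * (y ^ (-ν) * Real.exp (-1 * y)))
      atTop (𝓝 ((Real.exp 1 * besselK μ 1) * 0)) :=
    (tendsto_rpow_mul_exp_neg_mul_atTop_nhds_zero (-ν) 1 one_pos).const_mul _
  rw [mul_zero] at hb
  apply squeeze_zero' (t₀ := atTop)
  · filter_upwards [eventually_ge_atTop (1:ℝ)] with y hy
    have hy0 : (0:ℝ) < y := lt_of_lt_of_le one_pos hy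
    exact mul_nonneg (Real.rpow_nonneg hy0.le _) (besselK_pos hy0 μ).le
  · filter_upwards [eventually_ge_atTop (1:ℝ)] with y hy
    have hy0 : (0:ℝ) < y := lt_of_lt_of_le one_pos hy
    have h1 := besselK_le_exp_decay (μ := μ) one_pos hy
    calc y ^ (-ν) * besselK μ y ≤ y ^ (-ν) * (Real.exp (1 - y) * besselK μ 1) :=
          mul_le_mul_of_nonneg_left h1 (Real.rpow_nonneg hy0.le _)
      _ = (Real.exp 1 * besselK μ 1) * (y ^ (-ν) * Real.exp (-1 * y)) := by
          rw [Real.exp_sub, neg_one_mul, Real.exp_neg, div_eq_mul_inv]; ring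
  · exact hb

/-- FTC identity: `∫_{Ioi s} t^{-(μ-1)} K_μ(t) dt = s^{-(μ-1)} K_{μ-1}(s)`, with integrability. -/
lemma besselK_tail_integrable_and_eq {μ s : ℝ} (hs : 0 < s) :
    IntegrableOn (fun t => t ^ (-(μ-1)) * besselK μ t) (Ioi s) ∧
    (∫ t in Ioi s, t ^ (-(μ-1)) * besselK μ t) = s ^ (-(μ-1)) * besselK (μ-1) s := by
  set g : ℝ → ℝ := fun y => -(y ^ (-(μ-1)) * besselK (μ-1) y) with hg
  have hderiv : ∀ y ∈ Ici s, HasDerivAt g (y ^ (-(μ-1)) * besselK μ y) y := by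
    intro y hy
    have hy0 : 0 < y := lt_of_lt_of_le hs hy
    have h := (hasDerivAt_rpow_mul_besselK hy0 (μ-1)).neg
    rw [neg_neg, sub_add_cancel] at h
    exact h
  have hpos : ∀ y ∈ Ioi s, 0 ≤ y ^ (-(μ-1)) * besselK μ y := by
    intro y hy
    have hy0 : 0 < y := lt_trans hs hy
    exact mul_nonneg (Real.rpow_nonneg hy0.le _) (besselK_pos hy0 μ).le
  have htop : Tendsto g atTop (𝓝 0) := by
    rw [hg]
    have := (tendsto_rpow_mul_besselK (μ-1) (μ-1)).neg
    simpa using this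
  constructor
  · exact integrableOn_Ioi_deriv_of_nonneg' hderiv hpos htop
  · have := integral_Ioi_of_hasDerivAt_of_nonneg' hderiv hpos htop
    rw [this, hg]
    simp

section tails
variable {μ ν s : ℝ}

lemma g_continuousOn (ν μ : ℝ) :
    ContinuousOn (fun t => t ^ (-ν) * besselK μ t) (Ioi 0) := by
  refine ContinuousOn.mul ?_ (besselK_continuousOn μ)
  intro t ht
  exact (Real.continuousAt_rpow_const t (-ν) (Or.inl (ne_of_gt ht))).continuousWithinAt

lemma rpow_factor_bound (hd : μ - 1 ≤ ν) (hs : 0 < s) {t A : ℝ} (ht : t ∈ Ioi s) (hA : 0 ≤ A) :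
    t ^ (-ν) * A ≤ s ^ ((μ-1) - ν) * (t ^ (-(μ-1)) * A) := by
  have ht0 : 0 < t := lt_trans hs ht
  have h1 : t ^ (-ν) = t ^ (-(μ-1)) * t ^ ((μ-1) - ν) := by
    rw [← Real.rpow_add ht0]; ring_nf
  have h2 : t ^ ((μ-1) - ν) ≤ s ^ ((μ-1) - ν) :=
    Real.rpow_le_rpow_of_nonpos hs (le_of_lt ht) (by linarith)
  rw [h1]
  calc t ^ (-(μ-1)) * t ^ ((μ-1) - ν) * A
      ≤ t ^ (-(μ-1)) * s ^ ((μ-1) - ν) * A := by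
        apply mul_le_mul_of_nonneg_right _ hA
        exact mul_le_mul_of_nonneg_left h2 (Real.rpow_nonneg ht0.le _)
    _ = s ^ ((μ-1) - ν) * (t ^ (-(μ-1)) * A) := by ring

lemma tail_integrable_g (hd : μ - 1 ≤ ν) (hs : 0 < s) :
    IntegrableOn (fun t => t ^ (-ν) * besselK μ t) (Ioi s) := by
  refine Integrable.mono (((besselK_tail_integrable_and_eq (μ := μ) hs).1).const_mul
    (s ^ ((μ-1) - ν))) ?_ ?_
  · exact ((g_continuousOn ν μ).mono (Ioi_subset_Ioi hs.le)).aestronglyMeasurable measurableSet_Ioi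
  · filter_upwards [ae_restrict_mem measurableSet_Ioi] with t ht
    have ht0 : 0 < t := lt_trans hs ht
    rw [norm_eq_abs, norm_eq_abs,
      abs_of_nonneg (mul_nonneg (Real.rpow_nonneg ht0.le _) (besselK_pos ht0 μ).le),
      abs_of_nonneg (mul_nonneg (Real.rpow_nonneg hs.le _)
        (mul_nonneg (Real.rpow_nonneg ht0.le _) (besselK_pos ht0 μ).le))]
    exact rpow_factor_bound hd hs ht (besselK_pos ht0 μ).le

lemma tail_strict_lt (hd : μ - 1 < ν) (hμ : 1/2 ≤ μ) (hs : 0 < s) :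
    (∫ t in Ioi s, t ^ (-ν) * besselK μ t) < s ^ (-ν) * besselK μ s := by
  have hint1 := tail_integrable_g hd.le hs
  have hint2 := ((besselK_tail_integrable_and_eq (μ := μ) hs).1).const_mul (s ^ ((μ-1) - ν))
  have hstep : (∫ t in Ioi s, t ^ (-ν) * besselK μ t)
      < ∫ t in Ioi s, s ^ ((μ-1) - ν) * (t ^ (-(μ-1)) * besselK μ t) := by
    rw [← sub_pos, ← integral_sub hint2 hint1]
    have hptws : ∀ t ∈ Ioi s, t ^ (-ν) * besselK μ t
        < s ^ ((μ-1) - ν) * (t ^ (-(μ-1)) * besselK μ t) := by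
      intro t ht
      have ht0 : 0 < t := lt_trans hs ht
      have h1 : t ^ (-ν) < s ^ ((μ-1) - ν) * t ^ (-(μ-1)) := by
        have e1 : t ^ (-ν) = t ^ ((μ-1) - ν) * t ^ (-(μ-1)) := by
          rw [← Real.rpow_add ht0]; ring_nf
        rw [e1]
        exact mul_lt_mul_of_pos_right
          (Real.rpow_lt_rpow_of_neg hs ht (by linarith)) (Real.rpow_pos_of_pos ht0 _)
      calc t ^ (-ν) * besselK μ t < s ^ ((μ-1) - ν) * t ^ (-(μ-1)) * besselK μ t :=
            mul_lt_mul_of_pos_right h1 (besselK_pos ht0 μ)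
        _ = s ^ ((μ-1) - ν) * (t ^ (-(μ-1)) * besselK μ t) := by ring
    rw [setIntegral_pos_iff_support_of_nonneg_ae]
    · have hsub : Ioi s ⊆ Function.support
          (fun t => s ^ ((μ-1) - ν) * (t ^ (-(μ-1)) * besselK μ t) - t ^ (-ν) * besselK μ t) := by
        intro t ht
        simp only [Function.mem_support]
        have := hptws t ht
        intro hcontra
        rw [sub_eq_zero] at hcontra
        exact absurd hcontra.symm (ne_of_lt this)
      rw [inter_eq_self_of_subset_right hsub, Real.volume_Ioi]
      exact ENNReal.zero_lt_top
    · filter_upwards [ae_restrict_mem measurableSet_Ioi] with t ht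
      have := hptws t ht
      simp only [Pi.zero_apply]
      linarith
    · exact hint2.sub hint1
  rw [integral_const_mul, (besselK_tail_integrable_and_eq (μ := μ) hs).2] at hstep
  have hμ1 : besselK (μ-1) s ≤ besselK μ s := by
    apply besselK_mono_order hs
    rw [abs_of_nonneg (by linarith : (0:ℝ) ≤ μ)]
    exact abs_le.2 ⟨by linarith, by linarith⟩
  have hcollapse : s ^ ((μ-1) - ν) * (s ^ (-(μ-1)) * besselK (μ-1) s)
      = s ^ (-ν) * besselK (μ-1) s := by
    rw [← mul_assoc, ← Real.rpow_add hs]; ring_nf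
  rw [hcollapse] at hstep
  exact lt_of_lt_of_le hstep
    (mul_le_mul_of_nonneg_left hμ1 (Real.rpow_nonneg hs.le _))

set_option maxHeartbeats 1000000 in
lemma tail_integrable_eg {γ : ℝ} (hγ0 : 0 ≤ γ) (hγ1 : γ < 1) (hd : μ - 1 ≤ ν) (hs : 0 < s) :
    IntegrableOn (fun t => Real.exp (γ * t) * (t ^ (-ν) * besselK μ t)) (Ioi s) := by
  have h1γ : 0 < 1 - γ := by linarith
  have hbase : IntegrableOn (fun u => u ^ (-(μ-1)) * besselK μ u) (Ioi ((1-γ) * s)) :=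
    (besselK_tail_integrable_and_eq (μ := μ) (mul_pos h1γ hs)).1
  have hcomp : IntegrableOn (fun t => ((1-γ)*t) ^ (-(μ-1)) * besselK μ ((1-γ)*t)) (Ioi s) :=
    (integrableOn_Ioi_comp_mul_left_iff _ s h1γ).2 hbase
  refine Integrable.mono ((hcomp.const_mul (s ^ ((μ-1) - ν) * (1-γ) ^ (μ-1)))) ?_ ?_
  · apply ContinuousOn.aestronglyMeasurable ?_ measurableSet_Ioi
    exact ContinuousOn.mul
      (Real.continuous_exp.comp (continuous_const.mul continuous_id)).continuousOn
      ((g_continuousOn ν μ).mono (Ioi_subset_Ioi hs.le))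
  · filter_upwards [ae_restrict_mem measurableSet_Ioi] with t ht
    have ht0 : 0 < t := lt_trans hs ht
    have hKpos := besselK_pos ht0 μ
    have hK2pos := besselK_pos (show 0 < (1-γ)*t by positivity) μ
    have he : (0:ℝ) < Real.exp (γ*t) := Real.exp_pos _
    rw [norm_eq_abs, norm_eq_abs,
      abs_of_nonneg (by positivity : (0:ℝ) ≤ Real.exp (γ*t) * (t ^ (-ν) * besselK μ t)),
      abs_of_nonneg (by positivity : (0:ℝ) ≤ s ^ ((μ-1) - ν) * (1-γ) ^ (μ-1) *
        (((1-γ)*t) ^ (-(μ-1)) * besselK μ ((1-γ)*t)))]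
    have h2 : Real.exp (γ*t) * besselK μ t ≤ besselK μ ((1-γ)*t) :=
      exp_mul_besselK_le hγ0 hγ1 ht0
    have hfac : (1-γ) ^ (μ-1) * ((1-γ)*t) ^ (-(μ-1)) = t ^ (-(μ-1)) := by
      rw [Real.mul_rpow h1γ.le ht0.le, ← mul_assoc, ← Real.rpow_add h1γ]
      simp
    calc Real.exp (γ*t) * (t ^ (-ν) * besselK μ t)
        = t ^ (-ν) * (Real.exp (γ*t) * besselK μ t) := by ring
      _ ≤ s ^ ((μ-1) - ν) * (t ^ (-(μ-1)) * (Real.exp (γ*t) * besselK μ t)) :=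
          rpow_factor_bound hd hs ht (by positivity)
      _ ≤ s ^ ((μ-1) - ν) * (t ^ (-(μ-1)) * besselK μ ((1-γ)*t)) := by
          apply mul_le_mul_of_nonneg_left _ (Real.rpow_nonneg hs.le _)
          exact mul_le_mul_of_nonneg_left h2 (Real.rpow_nonneg ht0.le _)
      _ = s ^ ((μ-1) - ν) * (1-γ) ^ (μ-1) * (((1-γ)*t) ^ (-(μ-1)) * besselK μ ((1-γ)*t)) := by
          rw [← hfac]; ring

section generic
variable {f : ℝ → ℝ} {x : ℝ}

lemma tail_split (hf : IntegrableOn f (Ioi x)) {r : ℝ} (hr : x ≤ r) :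
    (∫ t in Ioi r, f t) = (∫ t in Ioi x, f t) - ∫ t in x..r, f t := by
  rw [intervalIntegral.integral_of_le hr]
  have hunion : Ioc x r ∪ Ioi r = Ioi x := Ioc_union_Ioi_eq_Ioi hr
  have h1 : IntegrableOn f (Ioc x r) := hf.mono_set (Ioc_subset_Ioi_self)
  have h2 : IntegrableOn f (Ioi r) := hf.mono_set (Ioi_subset_Ioi hr)
  rw [← hunion, setIntegral_union (Ioc_disjoint_Ioi le_rfl) measurableSet_Ioi h1 h2]
  ring

lemma tail_tendsto_zero (hf : IntegrableOn f (Ioi x)) :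
    Tendsto (fun r => ∫ t in Ioi r, f t) atTop (𝓝 0) := by
  have h1 : Tendsto (fun r => ∫ t in x..r, f t) atTop (𝓝 (∫ t in Ioi x, f t)) :=
    intervalIntegral_tendsto_integral_Ioi x hf tendsto_id
  have h2 : Tendsto (fun r => (∫ t in Ioi x, f t) - ∫ t in x..r, f t) atTop
      (𝓝 ((∫ t in Ioi x, f t) - ∫ t in Ioi x, f t)) := tendsto_const_nhds.sub h1
  rw [sub_self] at h2
  apply h2.congr'
  filter_upwards [eventually_ge_atTop x] with r hr
  exact (tail_split hf hr).symm

lemma tail_hasDerivAt (hcont : ContinuousOn f (Ioi 0))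
    (hint : ∀ s : ℝ, 0 < s → IntegrableOn f (Ioi s)) {s : ℝ} (hs : 0 < s) :
    HasDerivAt (fun r => ∫ t in Ioi r, f t) (-(f s)) s := by
  set a := s/2 with ha
  have ha0 : 0 < a := by positivity
  have has : a < s := by rw [ha]; linarith
  have hfa := hint a ha0
  have hprim : HasDerivAt (fun r => ∫ t in a..r, f t) (f s) s := by
    apply intervalIntegral.integral_hasDerivAt_right
    · rw [intervalIntegrable_iff_integrableOn_Ioc_of_le has.le]
      exact hfa.mono_set Ioc_subset_Ioi_self
    · exact ContinuousOn.stronglyMeasurableAtFilter isOpen_Ioi hcont s hs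
    · exact hcont.continuousAt (isOpen_Ioi.mem_nhds hs)
  have hD : HasDerivAt (fun r => (∫ t in Ioi a, f t) - ∫ t in a..r, f t) (-(f s)) s :=
    hprim.const_sub _
  apply hD.congr_of_eventuallyEq
  filter_upwards [isOpen_Ioi.mem_nhds (show s ∈ Ioi a from has)] with r hr
  exact tail_split hfa (le_of_lt hr)
end generic

theorem stmt_4 (γ ν n : ℝ) (hγ0 : 0 < γ) (hγ1 : γ < 1) (hn : n < 1) (hν : ν ≥ 1 / 2 - n) :
    ∀ x : ℝ, 0 < x →
      (∫ t in Ioi x, Real.exp (γ * t) * besselK (ν + n) t / t ^ ν) <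
        (Real.exp (γ * x) / (1 - γ)) * ∫ t in Ioi x, besselK (ν + n) t / t ^ ν := by
  intro x hx
  set μ : ℝ := ν + n with hμdef
  have hμ : 1/2 ≤ μ := by rw [hμdef]; linarith
  have hd : μ - 1 < ν := by rw [hμdef]; linarith
  have h1γ : 0 < 1 - γ := by linarith
  set g : ℝ → ℝ := fun t => t ^ (-ν) * besselK μ t with hgdef
  set eg : ℝ → ℝ := fun t => Real.exp (γ * t) * g t with hegdef
  have hg_cont : ContinuousOn g (Ioi 0) := g_continuousOn ν μ
  have heg_cont : ContinuousOn eg (Ioi 0) :=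
    (Real.continuous_exp.comp (continuous_const.mul continuous_id)).continuousOn.mul hg_cont
  have hg_int : ∀ s : ℝ, 0 < s → IntegrableOn g (Ioi s) := fun s hs => tail_integrable_g hd.le hs
  have heg_int : ∀ s : ℝ, 0 < s → IntegrableOn eg (Ioi s) :=
    fun s hs => tail_integrable_eg hγ0.le hγ1 hd.le hs
  have hg_pos : ∀ t : ℝ, 0 < t → 0 < g t := fun t ht =>
    mul_pos (Real.rpow_pos_of_pos ht _) (besselK_pos ht μ)
  set G : ℝ → ℝ := fun s => ∫ t in Ioi s, g t with hGdef
  set F : ℝ → ℝ := fun s => ∫ t in Ioi s, eg t with hFdef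
  set H : ℝ → ℝ := fun s => Real.exp (γ * s) * G s - (1 - γ) * F s with hHdef
  -- derivatives
  have hG_deriv : ∀ s : ℝ, 0 < s → HasDerivAt G (-(g s)) s :=
    fun s hs => tail_hasDerivAt hg_cont hg_int hs
  have hF_deriv : ∀ s : ℝ, 0 < s → HasDerivAt F (-(eg s)) s :=
    fun s hs => tail_hasDerivAt heg_cont heg_int hs
  have hH_deriv : ∀ s : ℝ, 0 < s →
      HasDerivAt H (γ * Real.exp (γ * s) * (G s - g s)) s := by
    intro s hs
    have he : HasDerivAt (fun s : ℝ => Real.exp (γ * s)) (Real.exp (γ * s) * γ) s := by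
      simpa using ((hasDerivAt_id s).const_mul γ).exp
    have h := (he.mul (hG_deriv s hs)).sub ((hF_deriv s hs).const_mul (1 - γ))
    refine h.congr_deriv ?_
    simp only [hegdef]
    ring
  -- G s < g s
  have hGg : ∀ s : ℝ, 0 < s → G s < g s := fun s hs => tail_strict_lt hd hμ hs
  -- H is strictly antitone on Ioi 0
  have hH_anti : StrictAntiOn H (Ioi 0) := by
    apply strictAntiOn_of_deriv_neg (convex_Ioi 0)
    · exact fun s hs => ((hH_deriv s hs).continuousAt).continuousWithinAt
    · intro s hs
      rw [interior_Ioi] at hs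
      rw [(hH_deriv s hs).deriv]
      have h1 := hGg s hs
      have hepos : 0 < Real.exp (γ * s) := Real.exp_pos _
      exact mul_neg_of_pos_of_neg (mul_pos hγ0 hepos) (by linarith)
  -- H tends to 0 at top
  have hF_top : Tendsto F atTop (𝓝 0) := tail_tendsto_zero (heg_int x hx)
  have hG_nonneg : ∀ s : ℝ, x ≤ s → 0 ≤ G s := by
    intro s hsx
    have hs : 0 < s := lt_of_lt_of_le hx hsx
    apply setIntegral_nonneg measurableSet_Ioi
    intro t ht
    exact (hg_pos t (lt_trans hs ht)).le
  have hEG_le : ∀ s : ℝ, x ≤ s → Real.exp (γ * s) * G s ≤ F s := by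
    intro s hsx
    have hs : 0 < s := lt_of_lt_of_le hx hsx
    rw [hGdef, hFdef, ← integral_const_mul]
    apply setIntegral_mono_on ((hg_int s hs).const_mul _) (heg_int s hs) measurableSet_Ioi
    intro t ht
    have htpos : 0 < t := lt_trans hs ht
    exact mul_le_mul_of_nonneg_right
      (Real.exp_le_exp.2 (mul_le_mul_of_nonneg_left (le_of_lt ht) hγ0.le))
      (hg_pos t htpos).le
  have hEgG_top : Tendsto (fun s => Real.exp (γ * s) * G s) atTop (𝓝 0) := by
    apply squeeze_zero' ?_ ?_ hF_top
    · filter_upwards [eventually_ge_atTop x] with s hs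
      exact mul_nonneg (Real.exp_pos _).le (hG_nonneg s hs)
    · filter_upwards [eventually_ge_atTop x] with s hs
      exact hEG_le s hs
  have hH_top : Tendsto H atTop (𝓝 0) := by
    have := hEgG_top.sub (hF_top.const_mul (1 - γ))
    simpa using this
  -- conclude H x > 0
  have hH_x1 : 0 ≤ H (x + 1) := by
    refine le_of_tendsto hH_top ?_
    filter_upwards [eventually_ge_atTop (x + 1)] with s hs
    rcases eq_or_lt_of_le hs with h | h
    · rw [← h]
    · exact (hH_anti (by simp; linarith) (by simp; linarith) h).le
  have hHx : 0 < H x :=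
    lt_of_le_of_lt hH_x1 (hH_anti (by simp; linarith) (by simp; linarith) (by linarith))
  -- translate to the statement
  have hFx : F x < Real.exp (γ * x) / (1 - γ) * G x := by
    rw [div_mul_eq_mul_div, lt_div_iff₀ h1γ]
    simp only [hHdef] at hHx
    linarith
  have e1 : (∫ t in Ioi x, Real.exp (γ * t) * besselK μ t / t ^ ν) = F x := by
    rw [hFdef]
    apply setIntegral_congr_fun measurableSet_Ioi
    intro t ht
    have ht0 : 0 < t := lt_trans hx ht
    simp only [hegdef, hgdef]
    rw [Real.rpow_neg ht0.le]
    field_simp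
  have e2 : (∫ t in Ioi x, besselK μ t / t ^ ν) = G x := by
    rw [hGdef]
    apply setIntegral_congr_fun measurableSet_Ioi
    intro t ht
    have ht0 : 0 < t := lt_trans hx ht
    simp only [hgdef]
    rw [Real.rpow_neg ht0.le]
    field_simp
  rw [e1, e2]
  exact hFx
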